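/- Fix an n-tuple F = (f_1,…,f_n) of elements of P_n. For m ≥ 1 define Ψ_m(a) = Σ (−1)^{k−1} · r_k · Z_{r_1}(Z_{r_2}(⋯ Z_{r_k}(a) ⋯)) for a ∈ P_n, the sum over all compositions (r_1,…,r_k) of m, and set (F_m)_j = −Ψ_m(x_j). Then the n-tuple of formal power series X + Σ_{m≥1} t^m F_m is the formal inverse of X + tF; concretely, for every N ≥ 1 and every j, the coefficient of t^N in the polynomial (in P_n[t]) obtained from x_j + Σ_{m=1}^{N} t^m (F_m)_j by substituting x_i ↦ x_i + t·f_i for all i is zero (and its coefficient of t^0 is x_j). -/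

import Mathlib

open MvPolynomial

/-- `Pn k n` is the polynomial algebra `k[x₁,…,xₙ]`. -/
abbrev Pn (k : Type*) [CommRing k] (n : ℕ) := MvPolynomial (Fin n) k

/-- `Der k n` is the space of `k`-linear derivations of `Pn k n`. -/
abbrev Der (k : Type*) [CommRing k] (n : ℕ) := Derivation k (Pn k n) (Pn k n)

variable {k : Type*} [Field k] [CharZero k] {n : ℕ}

/-- The left-symmetric product of derivations: `(D · E)(xᵢ) = D (E xᵢ)`. -/
noncomputable def lsMul (D E : Der k n) : Der k n :=
  MvPolynomial.mkDerivation k (fun i => D (E (MvPolynomial.X i)))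

/-- The Jacobian matrix of a derivation: `(J D)ᵢⱼ = ∂(D xᵢ)/∂xⱼ`. -/
noncomputable def jac (D : Der k n) : Matrix (Fin n) (Fin n) (Pn k n) :=
  Matrix.of fun i j => MvPolynomial.pderiv j (D (MvPolynomial.X i))

/-- The divergence of a derivation. -/
noncomputable def divg (D : Der k n) : Pn k n :=
  ∑ i, MvPolynomial.pderiv i (D (MvPolynomial.X i))

/-- Right powers: `rpow D 1 = D`, `rpow D (r+1) = (rpow D r) · D` (for `r ≥ 1`). -/
noncomputable def rpow (D : Der k n) : ℕ → Der k n
  | 0 => D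
  | 1 => D
  | (r+2) => lsMul (rpow D (r+1)) D

/-- Left powers: `lpow D 1 = D`, `lpow D (r+1) = D · (lpow D r)` (for `r ≥ 1`). -/
noncomputable def lpow (D : Der k n) : ℕ → Der k n
  | 0 => D
  | 1 => D
  | (r+2) => lsMul D (lpow D (r+1))

/-- Right multiplication operator `R_D : E ↦ E · D`, as a `k`-linear endomorphism. -/
noncomputable def rmulOp (D : Der k n) : Der k n →ₗ[k] Der k n where
  toFun E := lsMul E D
  map_add' E₁ E₂ := by
    show (MvPolynomial.mkDerivationEquiv k) _ =
      (MvPolynomial.mkDerivationEquiv k) _ + (MvPolynomial.mkDerivationEquiv k) _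
    rw [← map_add]
    exact congrArg _ (funext fun i => by simp)
  map_smul' c E := by
    show (MvPolynomial.mkDerivationEquiv k) _ = c • (MvPolynomial.mkDerivationEquiv k) _
    rw [← map_smul]
    exact congrArg _ (funext fun i => by simp)

/-- Left multiplication operator `L_D : E ↦ D · E`, as a `k`-linear endomorphism. -/
noncomputable def lmulOp (D : Der k n) : Der k n →ₗ[k] Der k n where
  toFun E := lsMul D E
  map_add' E₁ E₂ := by
    show (MvPolynomial.mkDerivationEquiv k) _ =
      (MvPolynomial.mkDerivationEquiv k) _ + (MvPolynomial.mkDerivationEquiv k) _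
    rw [← map_add]
    exact congrArg _ (funext fun i => by simp)
  map_smul' c E := by
    show (MvPolynomial.mkDerivationEquiv k) _ = c • (MvPolynomial.mkDerivationEquiv k) _
    rw [← map_smul]
    exact congrArg _ (funext fun i => by simp)

/-- `Zc F i a` is the coefficient of `t^i` in the image of `a` under `xⱼ ↦ xⱼ + t·fⱼ`. -/
noncomputable def Zc (F : Fin n → Pn k n) (i : ℕ) (a : Pn k n) : Pn k n :=
  (MvPolynomial.aeval
    (fun j => Polynomial.C (MvPolynomial.X j) + Polynomial.C (F j) * Polynomial.X :
      Fin n → Polynomial (Pn k n)) a).coeff i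

/-- `PsiOp F m a = Σ (−1)^{k−1} r_k Z_{r₁}(Z_{r₂}(⋯ Z_{r_k}(a)⋯))`, summed over
compositions `(r₁,…,r_k)` of `m`. -/
noncomputable def PsiOp (F : Fin n → Pn k n) (m : ℕ) (a : Pn k n) : Pn k n :=
  ∑ c : Composition m,
    (-1 : Pn k n) ^ (c.length - 1) * ((c.blocks.getLastD 0 : ℕ) : Pn k n) *
      (c.blocks.foldr (fun r b => Zc F r b) a)

/-- Substitution `xᵢ ↦ xᵢ + t·fᵢ` applied to the coefficients of a polynomial in `t`
over `Pn k n` (with `t ↦ t`). -/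
noncomputable def substT (F : Fin n → Pn k n) (p : Polynomial (Pn k n)) : Polynomial (Pn k n) :=
  Polynomial.eval₂
    (MvPolynomial.aeval
      (fun i => Polynomial.C (MvPolynomial.X i) + Polynomial.C (F i) * Polynomial.X :
        Fin n → Polynomial (Pn k n)) : Pn k n →ₐ[k] Polynomial (Pn k n)).toRingHom
    Polynomial.X p

set_option linter.unusedSectionVars false

/-! ### Auxiliary lemmas for Statement 18 -/

section Aux

variable (F : Fin n → Pn k n)

lemma Zc_def (i : ℕ) (a : Pn k n) :
    Zc F i a = ((MvPolynomial.aeval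
      (fun j => Polynomial.C (MvPolynomial.X j) + Polynomial.C (F j) * Polynomial.X :
        Fin n → Polynomial (Pn k n)) : Pn k n →ₐ[k] Polynomial (Pn k n)) a).coeff i := rfl

lemma Zc_neg (i : ℕ) (a : Pn k n) : Zc F i (-a) = -Zc F i a := by
  simp only [Zc_def, map_neg, Polynomial.coeff_neg]

lemma Zc_zsmul (i : ℕ) (z : ℤ) (a : Pn k n) : Zc F i (z • a) = z • Zc F i a := by
  simp only [Zc_def, map_zsmul, Polynomial.coeff_smul]

lemma Zc_sum {ι : Type*} (i : ℕ) (s : Finset ι) (f : ι → Pn k n) :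
    Zc F i (∑ x ∈ s, f x) = ∑ x ∈ s, Zc F i (f x) := by
  simp only [Zc_def, map_sum, Polynomial.finset_sum_coeff]

lemma Zc_zero (a : Pn k n) : Zc F 0 a = a := by
  rw [Zc_def, Polynomial.coeff_zero_eq_eval_zero]
  induction a using MvPolynomial.induction_on with
  | C c => simp [MvPolynomial.algebraMap_eq, Polynomial.algebraMap_apply]
  | add p q hp hq => simp [hp, hq]
  | mul_X p j hp => simp [hp]

lemma Zc_X (i : ℕ) (j : Fin n) :
    Zc F i (MvPolynomial.X j) =
      if i = 0 then MvPolynomial.X j else if i = 1 then F j else 0 := by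
  rw [Zc_def, MvPolynomial.aeval_X]
  rcases i with _ | _ | i <;>
    simp [Polynomial.coeff_add, Polynomial.coeff_C, Polynomial.coeff_C_mul,
      Polynomial.coeff_X]

/-- The nested application of `Zc` along a list of indices. -/
noncomputable def nestZ (bl : List ℕ) (a : Pn k n) : Pn k n :=
  bl.foldr (fun r b => Zc F r b) a

/-- The signed term attached to a block list. -/
noncomputable def trm (bl : List ℕ) (a : Pn k n) : Pn k n :=
  (((-1 : ℤ) ^ (bl.length - 1) * (bl.getLastD 0 : ℤ))) • nestZ F bl a

/-- `PsiOp` rewritten with integer scalars. -/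
lemma PsiOp_eq (m : ℕ) (a : Pn k n) :
    PsiOp F m a = ∑ c : Composition m, trm F c.blocks a := by
  unfold PsiOp trm nestZ
  refine Finset.sum_congr rfl fun c _ => ?_
  rw [zsmul_eq_mul, ← c.blocks_length]
  push_cast
  ring

lemma comp_blocks_ne_nil {m : ℕ} (hm : 0 < m) (c : Composition m) : c.blocks ≠ [] := by
  intro h
  have hs := c.blocks_sum
  rw [h] at hs
  simp at hs
  omega

lemma comp_zero_blocks (c : Composition 0) : c.blocks = [] := by
  rcases hb : c.blocks with _ | ⟨a, l⟩
  · rfl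
  · have hs := c.blocks_sum
    rw [hb] at hs
    have ha : 0 < a := c.blocks_pos (by rw [hb]; exact List.mem_cons_self)
    simp [List.sum_cons] at hs
    omega

instance compZeroUnique : Unique (Composition 0) where
  default := ⟨[], by intro i h; simp at h, rfl⟩
  uniq c := by
    ext1
    exact comp_zero_blocks c

lemma tail_sum_lt {M : ℕ} (c : Composition (M + 1)) : c.blocks.tail.sum < M + 1 := by
  rcases hb : c.blocks with _ | ⟨a, l⟩
  · exact absurd hb (comp_blocks_ne_nil (Nat.succ_pos M) c)
  · have hs := c.blocks_sum
    rw [hb] at hs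
    simp only [List.sum_cons] at hs
    have ha : 0 < a := c.blocks_pos (by rw [hb]; exact List.mem_cons_self)
    simp only [hb, List.tail_cons]
    omega

lemma cons_tail_eq {M : ℕ} (c : Composition (M + 1)) :
    (M + 1 - c.blocks.tail.sum) :: c.blocks.tail = c.blocks := by
  rcases hb : c.blocks with _ | ⟨a, l⟩
  · exact absurd hb (comp_blocks_ne_nil (Nat.succ_pos M) c)
  · have hs := c.blocks_sum
    rw [hb] at hs
    simp only [List.sum_cons] at hs
    simp only [List.tail_cons]
    congr 1
    omega

lemma sigmaCompExt {M : ℕ} {p q : Σ m : Fin (M + 1), Composition m.val}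
    (h : p.2.blocks = q.2.blocks) : p = q := by
  rcases p with ⟨m₁, d₁⟩
  rcases q with ⟨m₂, d₂⟩
  simp only at h
  have hm : m₁ = m₂ := by
    have h1 := d₁.blocks_sum
    have h2 := d₂.blocks_sum
    apply Fin.ext
    rw [← h1, ← h2, h]
  subst hm
  rw [Sigma.mk.inj_iff]
  exact ⟨rfl, heq_of_eq (Composition.ext h)⟩

/-- Splitting off the first block of a composition of `M+1`. -/
noncomputable def compEquiv (M : ℕ) :
    Composition (M + 1) ≃ Σ m : Fin (M + 1), Composition m.val where
  toFun c := ⟨⟨c.blocks.tail.sum, tail_sum_lt c⟩,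
    ⟨c.blocks.tail, fun hi => c.blocks_pos (List.mem_of_mem_tail hi), rfl⟩⟩
  invFun p := ⟨(M + 1 - p.1.val) :: p.2.blocks,
    by
      intro i hi
      rcases List.mem_cons.1 hi with h | h
      · have := p.1.isLt
        omega
      · exact p.2.blocks_pos h,
    by
      have h1 := p.2.blocks_sum
      have h2 := p.1.isLt
      simp only [List.sum_cons, h1]
      omega⟩
  left_inv c := by
    ext1
    exact cons_tail_eq c
  right_inv p := by
    apply sigmaCompExt
    rfl

/-- The `m = 0` inner sum. -/
lemma inner_zero (s : ℕ) (a : Pn k n) :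
    ∑ d : Composition 0, trm F (s :: d.blocks) a = (s : ℤ) • Zc F s a := by
  rw [Fintype.sum_unique]
  have hd : (default : Composition 0).blocks = [] := rfl
  simp [hd, comp_zero_blocks, trm, nestZ]

/-- The `m ≥ 1` inner sums. -/
lemma inner_pos (m s : ℕ) (hm : 0 < m) (a : Pn k n) :
    ∑ d : Composition m, trm F (s :: d.blocks) a = -Zc F s (PsiOp F m a) := by
  rw [PsiOp_eq, Zc_sum, ← Finset.sum_neg_distrib]
  refine Finset.sum_congr rfl fun d _ => ?_
  have hne : d.blocks ≠ [] := comp_blocks_ne_nil hm d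
  obtain ⟨b, t, hb⟩ := List.exists_cons_of_ne_nil hne
  unfold trm nestZ
  rw [Zc_zsmul]
  simp only [hb, List.foldr_cons, List.length_cons, List.getLastD_cons,
    Nat.add_sub_cancel]
  rw [← neg_smul]
  congr 1
  rw [pow_succ]
  ring

set_option maxHeartbeats 1000000 in
/-- The key recursion: `∑_{m=1}^{M+1} Z_{M+1-m}(Ψ_m a) = (M+1)·Z_{M+1}(a)`. -/
lemma psi_sum (M : ℕ) (a : Pn k n) :
    ∑ m ∈ Finset.Icc 1 (M + 1), Zc F ((M + 1) - m) (PsiOp F m a) =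
      (((M : ℤ) + 1)) • Zc F (M + 1) a := by
  rw [Finset.sum_Icc_succ_top (by omega : 1 ≤ M + 1)]
  have h0 : Zc F ((M + 1) - (M + 1)) (PsiOp F (M + 1) a) = PsiOp F (M + 1) a := by
    rw [Nat.sub_self, Zc_zero]
  rw [h0]
  have key : PsiOp F (M + 1) a =
      (((M : ℤ) + 1)) • Zc F (M + 1) a -
        ∑ m ∈ Finset.Icc 1 M, Zc F ((M + 1) - m) (PsiOp F m a) := by
    rw [PsiOp_eq]
    rw [Fintype.sum_equiv (compEquiv M)
      (fun c : Composition (M + 1) => trm F c.blocks a)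
      (fun p : Σ m : Fin (M + 1), Composition m.val =>
        trm F ((M + 1 - p.1.val) :: p.2.blocks) a)
      (fun c => by
        show trm F c.blocks a = trm F ((M + 1 - c.blocks.tail.sum) :: c.blocks.tail) a
        rw [cons_tail_eq])]
    rw [← Finset.univ_sigma_univ, Finset.sum_sigma, Fin.sum_univ_succ]
    have t0 : (∑ d : Composition ((0 : Fin (M + 1)) : ℕ),
        trm F ((M + 1 - ((0 : Fin (M + 1)) : ℕ)) :: d.blocks) a) =
        (((M : ℤ) + 1)) • Zc F (M + 1) a := by
      have : ((0 : Fin (M + 1)) : ℕ) = 0 := rfl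
      rw [this, Nat.sub_zero, inner_zero]
      push_cast
      ring_nf
    rw [t0]
    have t1 : (∑ i : Fin M, ∑ d : Composition ((Fin.succ i : Fin (M + 1)) : ℕ),
        trm F ((M + 1 - ((Fin.succ i : Fin (M + 1)) : ℕ)) :: d.blocks) a) =
        -∑ m ∈ Finset.Icc 1 M, Zc F ((M + 1) - m) (PsiOp F m a) := by
      rw [← Finset.sum_neg_distrib]
      rw [← Finset.Ico_add_one_right_eq_Icc, Finset.sum_Ico_eq_sum_range]
      simp only [Nat.add_sub_cancel]
      rw [← Fin.sum_univ_eq_sum_range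
        (fun i => -Zc F ((M + 1) - (1 + i)) (PsiOp F (1 + i) a)) M]
      refine Finset.sum_congr rfl fun i _ => ?_
      have hv : ((Fin.succ i : Fin (M + 1)) : ℕ) = i.val + 1 := rfl
      rw [hv, inner_pos F (i.val + 1) _ (Nat.succ_pos _)]
      have h1 : 1 + i.val = i.val + 1 := by omega
      rw [h1]
    rw [t1]
    abel
  rw [key]
  abel

end Aux

/-- with `(F_m)_j = −Ψ_m(x_j)`, the series `X + Σ t^m F_m` is the formal
inverse of `X + tF`: substituting `xᵢ ↦ xᵢ + t·fᵢ` into `x_j + Σ_{m=1}^N t^m (F_m)_j`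
kills the coefficient of `t^N` (and the constant coefficient is `x_j`). -/
theorem formal_inverse_coeffs (hn : 1 ≤ n) (F : Fin n → Pn k n) (N : ℕ) (hN : 1 ≤ N)
    (j : Fin n) :
    (substT F (Polynomial.C (MvPolynomial.X j) +
        ∑ m ∈ Finset.Icc 1 N,
          Polynomial.C (-(PsiOp F m (MvPolynomial.X j))) * Polynomial.X ^ m)).coeff N = 0 ∧
    (substT F (Polynomial.C (MvPolynomial.X j) +
        ∑ m ∈ Finset.Icc 1 N,
          Polynomial.C (-(PsiOp F m (MvPolynomial.X j))) * Polynomial.X ^ m)).coeff 0 =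
      MvPolynomial.X j := by
  have hc : ∀ d : ℕ,
      (substT F (Polynomial.C (MvPolynomial.X j) +
        ∑ m ∈ Finset.Icc 1 N,
          Polynomial.C (-(PsiOp F m (MvPolynomial.X j))) * Polynomial.X ^ m)).coeff d =
      Zc F d (MvPolynomial.X j) +
        ∑ m ∈ Finset.Icc 1 N,
          (if m ≤ d then Zc F (d - m) (-(PsiOp F m (MvPolynomial.X j))) else 0) := by
    intro d
    unfold substT
    rw [Polynomial.eval₂_add, Polynomial.eval₂_C, Polynomial.eval₂_finset_sum,
      Polynomial.coeff_add, Polynomial.finset_sum_coeff]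
    congr 1
    refine Finset.sum_congr rfl fun m _ => ?_
    rw [Polynomial.eval₂_mul, Polynomial.eval₂_C, Polynomial.eval₂_X_pow,
      Polynomial.coeff_mul_X_pow']
    rfl
  constructor
  · rw [hc N]
    obtain ⟨M, rfl⟩ : ∃ M, N = M + 1 := ⟨N - 1, by omega⟩
    have hs : ∑ m ∈ Finset.Icc 1 (M + 1),
        (if m ≤ M + 1 then Zc F ((M + 1) - m) (-(PsiOp F m (MvPolynomial.X j))) else 0) =
        -∑ m ∈ Finset.Icc 1 (M + 1), Zc F ((M + 1) - m) (PsiOp F m (MvPolynomial.X j)) := by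
      rw [← Finset.sum_neg_distrib]
      refine Finset.sum_congr rfl fun m hm => ?_
      rw [if_pos (Finset.mem_Icc.1 hm).2, Zc_neg]
    rw [hs, psi_sum]
    rcases M with _ | M'
    · simp
    · have hz : Zc F (M' + 1 + 1) (MvPolynomial.X j) = 0 := by
        rw [Zc_X]
        norm_num
      rw [hz]
      simp
  · rw [hc 0, Zc_zero]
    have hz : ∑ m ∈ Finset.Icc 1 N,
        (if m ≤ 0 then Zc F (0 - m) (-(PsiOp F m (MvPolynomial.X j))) else 0) = 0 := by
      refine Finset.sum_eq_zero fun m hm => ?_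
      have h1 := (Finset.mem_Icc.1 hm).1
      rw [if_neg (by omega)]
    rw [hz, add_zero]
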